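/- Suppose a signed graph admits a weakly balanced partition. For vertices i and j, let μ_l⁺(i,j) and μ_l⁻(i,j) denote the numbers of positive and negative walks of length l from i to j, and define the non-noise score Γ_{ij} = ∑_{l=1}^{L'} α_l (μ_l⁺(i,j) − μ_l⁻(i,j)) for any positive coefficients α_l. Then Γ_{ij} ≥ 0 whenever i and j lie in the same cluster, and Γ_{ij} ≤ 0 whenever they lie in different clusters. -/

import Mathlib

open Matrix BigOperators

/-- Number of positive walks (all edges positive) of length `l` from `i` to `j`. -/
def countPosWalks {n : ℕ} (A : Matrix (Fin n) (Fin n) ℤ) (l : ℕ) (i j : Fin n) : ℕ :=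
  (Finset.univ.filter (fun w : Fin (l + 1) → Fin n =>
    w 0 = i ∧ w (Fin.last l) = j ∧
      ∀ k : Fin l, A (w k.castSucc) (w k.succ) = 1)).card

/-- Number of negative walks (exactly one negative edge, all others positive)
of length `l` from `i` to `j`. -/
def countNegWalks {n : ℕ} (A : Matrix (Fin n) (Fin n) ℤ) (l : ℕ) (i j : Fin n) : ℕ :=
  (Finset.univ.filter (fun w : Fin (l + 1) → Fin n =>
    w 0 = i ∧ w (Fin.last l) = j ∧
      ∃ k0 : Fin l, A (w k0.castSucc) (w k0.succ) = -1 ∧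
        ∀ k : Fin l, k ≠ k0 → A (w k.castSucc) (w k.succ) = 1)).card

/-- Positive part of a signed adjacency matrix. -/
def posPart {n : ℕ} (A : Matrix (Fin n) (Fin n) ℤ) : Matrix (Fin n) (Fin n) ℤ :=
  Matrix.of fun i j => max (A i j) 0

/-- Negative part of a signed adjacency matrix. -/
def negPart {n : ℕ} (A : Matrix (Fin n) (Fin n) ℤ) : Matrix (Fin n) (Fin n) ℤ :=
  Matrix.of fun i j => -min (A i j) 0


lemma seg_const {n K : ℕ} (A : Matrix (Fin n) (Fin n) ℤ) (c : Fin n → Fin K)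
    (hwb : ∀ u v, (A u v = 1 → c u = c v) ∧ (A u v = -1 → c u ≠ c v))
    {l : ℕ} (w : Fin (l + 1) → Fin n) :
    ∀ b (hb : b ≤ l) a (hab : a ≤ b),
      (∀ k : Fin l, a ≤ (k : ℕ) → (k : ℕ) < b → A (w k.castSucc) (w k.succ) = 1) →
      c (w ⟨a, by omega⟩) = c (w ⟨b, by omega⟩) := by
  intro b
  induction b with
  | zero =>
      intro hb a hab _
      have : a = 0 := by omega
      subst this; rfl
  | succ b ih =>
      intro hb a hab h
      rcases Nat.eq_or_lt_of_le hab with rfl | hlt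
      · rfl
      · have hab' : a ≤ b := by omega
        have hbl : b ≤ l := by omega
        have h1 : c (w ⟨a, by omega⟩) = c (w ⟨b, by omega⟩) :=
          ih hbl a hab' (fun k hk1 hk2 => h k hk1 (by omega))
        have hk : (⟨b, by omega⟩ : Fin l).castSucc = ⟨b, by omega⟩ := rfl
        have hk' : (⟨b, by omega⟩ : Fin l).succ = ⟨b + 1, by omega⟩ := rfl
        have h2 : A (w ⟨b, by omega⟩) (w ⟨b + 1, by omega⟩) = 1 := by
          have := h ⟨b, by omega⟩ (by simpa using hab') (by simp)
          simpa [hk, hk'] using this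
        exact h1.trans ((hwb _ _).1 h2)

lemma zero_star {n K : ℕ} {l : ℕ} (hz : 0 < l + 1) (w : Fin (l+1) → Fin n) :
    w 0 = w ⟨0, hz⟩ := rfl

lemma pos_walk_same {n K : ℕ} (A : Matrix (Fin n) (Fin n) ℤ) (c : Fin n → Fin K)
    (hwb : ∀ u v, (A u v = 1 → c u = c v) ∧ (A u v = -1 → c u ≠ c v))
    {l : ℕ} (w : Fin (l + 1) → Fin n)
    (h : ∀ k : Fin l, A (w k.castSucc) (w k.succ) = 1) :
    c (w 0) = c (w (Fin.last l)) := by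
  have := seg_const A c hwb w l le_rfl 0 (Nat.zero_le _) (fun k _ _ => h k)
  simpa [Fin.last] using this

lemma neg_walk_diff {n K : ℕ} (A : Matrix (Fin n) (Fin n) ℤ) (c : Fin n → Fin K)
    (hwb : ∀ u v, (A u v = 1 → c u = c v) ∧ (A u v = -1 → c u ≠ c v))
    {l : ℕ} (w : Fin (l + 1) → Fin n) (k0 : Fin l)
    (hneg : A (w k0.castSucc) (w k0.succ) = -1)
    (hpos : ∀ k : Fin l, k ≠ k0 → A (w k.castSucc) (w k.succ) = 1) :
    c (w 0) ≠ c (w (Fin.last l)) := by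
  have h1 : c (w 0) = c (w ⟨(k0 : ℕ), by omega⟩) := by
    have := seg_const A c hwb w (k0 : ℕ) (by omega) 0 (Nat.zero_le _)
      (fun k _ hk2 => hpos k (by intro he; subst he; omega))
    simpa using this
  have h2 : c (w ⟨(k0 : ℕ) + 1, by omega⟩) = c (w (Fin.last l)) := by
    have := seg_const A c hwb w l le_rfl ((k0 : ℕ) + 1) (by omega)
      (fun k hk1 _ => hpos k (by intro he; subst he; omega))
    simpa [Fin.last] using this
  have hc : (k0.castSucc : Fin (l+1)) = ⟨(k0 : ℕ), by omega⟩ := rfl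
  have hs : (k0.succ : Fin (l+1)) = ⟨(k0 : ℕ) + 1, by omega⟩ := rfl
  have hne := (hwb _ _).2 hneg
  rw [hc, hs] at hne
  rw [h1, ← h2]
  exact hne

theorem nonnoise_score_sign {n K : ℕ} (A : Matrix (Fin n) (Fin n) ℤ)
    (c : Fin n → Fin K)
    (hwb : ∀ u v, (A u v = 1 → c u = c v) ∧ (A u v = -1 → c u ≠ c v))
    (L : ℕ) (hL : 1 ≤ L) (α : ℕ → ℝ) (hα : ∀ l, 0 < α l) (i j : Fin n) :
    let Γ : ℝ := ∑ l ∈ Finset.Icc 1 L,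
      α l * ((countPosWalks A l i j : ℝ) - (countNegWalks A l i j : ℝ))
    (c i = c j → 0 ≤ Γ) ∧ (c i ≠ c j → Γ ≤ 0) := by
  intro Γ
  constructor
  · intro hcij
    apply Finset.sum_nonneg
    intro l _
    have hneg : countNegWalks A l i j = 0 := by
      rw [countNegWalks, Finset.card_eq_zero, Finset.filter_eq_empty_iff]
      rintro w - ⟨h0, hlast, k0, hk0, hrest⟩
      exact neg_walk_diff A c hwb w k0 hk0 hrest (by rw [h0, hlast]; exact hcij)
    rw [hneg]
    have h0 : (0:ℝ) ≤ (countPosWalks A l i j : ℝ) := Nat.cast_nonneg _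
    exact mul_nonneg (hα l).le (by simpa using h0)
  · intro hcij
    apply Finset.sum_nonpos
    intro l _
    have hpos : countPosWalks A l i j = 0 := by
      rw [countPosWalks, Finset.card_eq_zero, Finset.filter_eq_empty_iff]
      rintro w - ⟨h0, hlast, hall⟩
      exact hcij (by rw [← h0, ← hlast]; exact pos_walk_same A c hwb w hall)
    rw [hpos]
    have : ((0:ℕ):ℝ) - (countNegWalks A l i j : ℝ) ≤ 0 := by
      simp [Nat.cast_nonneg]
    exact mul_nonpos_of_nonneg_of_nonpos (hα l).le this
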